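/- (Compactness of the extended measure set.) With notation as in Lemma 1 of the paper: if L and each L_n are weak*-compact sets of purely atomic finitely supported probability measures (on K, K_n respectively) with δ_{k_{n,0}} ∈ L_n for each n, then the set L′ = { Σ_{k ∈ supp l} l(k) Σ_{j ∈ K_n} l_n(j) δ_{(k,l,n,j)} : l ∈ L, n ∈ ℕ, l_n ∈ L_n } is weak*-compact in C(K′)*. -/

import Mathlib

open Topology Filter
open scoped Classical

/-- A fiber point `(k, l, n, j)` (with `j ≠ k_{n,0}`) of the extension `K′` in the
`⊗`-construction of the paper. -/
structure FiberPt (K : Type*) (Kn : ℕ → Type*) (L : Set (K →₀ ℝ)) (k0 : ∀ n, Kn n) where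
  n : ℕ
  k : K
  l : K →₀ ℝ
  j : Kn n
  hl : l ∈ L
  hk : l k ≠ 0
  hj : j ≠ k0 n

/-- The underlying set of `K′ = (K, L) ⊗ {(Kn n, Ln n)}`. -/
def GlueSpace (K : Type*) (Kn : ℕ → Type*) (L : Set (K →₀ ℝ)) (k0 : ∀ n, Kn n) : Type _ :=
  K ⊕ FiberPt K Kn L k0

section Top

variable {K : Type*} {Kn : ℕ → Type*} {L : Set (K →₀ ℝ)} {k0 : ∀ n, Kn n}
variable [TopologicalSpace K] [∀ n, TopologicalSpace (Kn n)]

/-- A basic open set of `K′` inside a single fiber copy of `Kn n \ {k_{n,0}}`. -/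
def fiberOpen (n : ℕ) (k : K) (l : K →₀ ℝ) (U : Set (Kn n)) :
    Set (GlueSpace K Kn L k0) :=
  Sum.inr '' {q : FiberPt K Kn L k0 | ∃ h : q.n = n, q.k = k ∧ q.l = l ∧ (h ▸ q.j) ∈ U}

/-- A basic neighborhood of the base copy of `K` in `K′`. -/
def baseOpen (G : Set K) (F : Finset (K × (K →₀ ℝ) × ℕ))
    (C : (t : K × (K →₀ ℝ) × ℕ) → Set (Kn t.2.2)) : Set (GlueSpace K Kn L k0) :=
  Sum.inl '' G ∪
    Sum.inr '' {q : FiberPt K Kn L k0 |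
      q.k ∈ G ∧ ¬((q.k, q.l, q.n) ∈ F ∧ q.j ∈ C (q.k, q.l, q.n))}

/-- The generating family for the topology of `K′` (Definition 1 of the paper). -/
def glueGen : Set (Set (GlueSpace K Kn L k0)) :=
  {S | ∃ (n : ℕ) (k : K) (l : K →₀ ℝ) (U : Set (Kn n)),
      IsOpen U ∧ k0 n ∉ U ∧ S = fiberOpen n k l U} ∪
  {S | ∃ (G : Set K) (F : Finset (K × (K →₀ ℝ) × ℕ))
      (C : (t : K × (K →₀ ℝ) × ℕ) → Set (Kn t.2.2)),
      IsOpen G ∧ (∀ t ∈ F, IsCompact (C t) ∧ k0 t.2.2 ∉ C t) ∧ S = baseOpen G F C}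

/-- The topology of `K′ = (K,L) ⊗ {(Kn n, Ln n)}`. -/
instance glueTop : TopologicalSpace (GlueSpace K Kn L k0) :=
  TopologicalSpace.generateFrom glueGen

end Top

/-- The weak* topology on finitely supported (purely atomic) measures on `X`, induced by
testing against `C(X, ℝ)`. -/
noncomputable instance finsuppWeakTop (X : Type*) [TopologicalSpace X] :
    TopologicalSpace (X →₀ ℝ) :=
  TopologicalSpace.induced (fun μ (f : C(X, ℝ)) => μ.sum fun x c => c * f x)
    Pi.topologicalSpace

/-- The extension of the measure `l ∈ L` by the measure `ln` on the `n`-th fiber: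
`Σ_{k ∈ supp l} l(k) Σ_{j ∈ Kn n} ln(j) δ_{(k,l,n,j)}`, with the points `(k,l,n,k_{n,0})`
identified with the base points `(k, ∅)`. -/
noncomputable def extendM {K : Type*} {Kn : ℕ → Type*} (L : Set (K →₀ ℝ)) (k0 : ∀ n, Kn n)
    (l : K →₀ ℝ) (hl : l ∈ L) (n : ℕ) (ln : Kn n →₀ ℝ) : GlueSpace K Kn L k0 →₀ ℝ :=
  ∑ k ∈ l.support.attach, ∑ j ∈ ln.support,
    Finsupp.single
      (if h : j = k0 n then (Sum.inl k.1 : GlueSpace K Kn L k0)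
       else Sum.inr ⟨n, k.1, l, j, hl, Finsupp.mem_support_iff.mp k.2, h⟩)
      (l k.1 * ln j)

/-- The extended measure set `L′` of the `⊗`-construction. -/
def glueL' {K : Type*} {Kn : ℕ → Type*} (L : Set (K →₀ ℝ)) (k0 : ∀ n, Kn n)
    (Ln : ∀ n, Set (Kn n →₀ ℝ)) : Set (GlueSpace K Kn L k0 →₀ ℝ) :=
  {μ | ∃ (l : K →₀ ℝ) (hl : l ∈ L) (n : ℕ) (ln : Kn n →₀ ℝ),
    ln ∈ Ln n ∧ μ = extendM L k0 l hl n ln}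

set_option linter.unusedSectionVars false
section Aux1

variable {K : Type*} {Kn : ℕ → Type*} {L : Set (K →₀ ℝ)} {k0 : ∀ n, Kn n}

/-- The point of `K′` corresponding to `(k,l,n,j)`, with `(k,l,n,k_{n,0})` identified
with the base point `k`. -/
noncomputable def glPt (l : K →₀ ℝ) (hl : l ∈ L) (n : ℕ) (k : K) (hk : l k ≠ 0) (j : Kn n) :
    GlueSpace K Kn L k0 :=
  if h : j = k0 n then Sum.inl k else Sum.inr ⟨n, k, l, j, hl, hk, h⟩

lemma glPt_pos {l : K →₀ ℝ} {hl : l ∈ L} {n : ℕ} {k : K} {hk : l k ≠ 0} {j : Kn n}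
    (h : j = k0 n) : glPt (k0 := k0) l hl n k hk j = Sum.inl k := dif_pos h

lemma glPt_neg {l : K →₀ ℝ} {hl : l ∈ L} {n : ℕ} {k : K} {hk : l k ≠ 0} {j : Kn n}
    (h : ¬ j = k0 n) : glPt (k0 := k0) l hl n k hk j = Sum.inr ⟨n, k, l, j, hl, hk, h⟩ :=
  dif_neg h

lemma extendM_eq (l : K →₀ ℝ) (hl : l ∈ L) (n : ℕ) (ln : Kn n →₀ ℝ) :
    extendM L k0 l hl n ln = ∑ k ∈ l.support.attach, ∑ j ∈ ln.support,
      Finsupp.single (glPt (k0 := k0) l hl n k.1 (Finsupp.mem_support_iff.mp k.2) j)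
        (l k.1 * ln j) := rfl

lemma extendM_congr {x y : {l // l ∈ L}} {s t : Σ n, Kn n →₀ ℝ} (hxy : x = y) (hst : s = t) :
    extendM L k0 x.1 x.2 s.1 s.2 = extendM L k0 y.1 y.2 t.1 t.2 := by
  subst hxy; subst hst; rfl

lemma sigma_eta {β : ℕ → Type*} (s : Σ n, β n) {n' : ℕ} (h : s.1 = n') :
    (⟨n', h ▸ s.2⟩ : Σ n, β n) = s := by
  rcases s with ⟨m, w⟩
  subst h
  rfl

section WithTop
variable [TopologicalSpace K] [∀ n, TopologicalSpace (Kn n)]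

@[simp] lemma inl_mem_baseOpen {G : Set K} {F : Finset (K × (K →₀ ℝ) × ℕ)}
    {C : (t : K × (K →₀ ℝ) × ℕ) → Set (Kn t.2.2)} {x : K} :
    (Sum.inl x : GlueSpace K Kn L k0) ∈ baseOpen G F C ↔ x ∈ G := by
  constructor
  · rintro (⟨y, hy, h⟩ | ⟨q, _, h⟩)
    · cases h; exact hy
    · cases h
  · intro h; exact Or.inl ⟨x, h, rfl⟩

@[simp] lemma inr_mem_baseOpen {G : Set K} {F : Finset (K × (K →₀ ℝ) × ℕ)}
    {C : (t : K × (K →₀ ℝ) × ℕ) → Set (Kn t.2.2)} {q : FiberPt K Kn L k0} :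
    (Sum.inr q : GlueSpace K Kn L k0) ∈ baseOpen G F C ↔
      q.k ∈ G ∧ ¬((q.k, q.l, q.n) ∈ F ∧ q.j ∈ C (q.k, q.l, q.n)) := by
  constructor
  · rintro (⟨y, hy, h⟩ | ⟨q', hq', h⟩)
    · cases h
    · cases h; exact hq'
  · intro h; exact Or.inr ⟨q, h, rfl⟩

@[simp] lemma inl_not_mem_fiberOpen {n : ℕ} {k : K} {l : K →₀ ℝ} {U : Set (Kn n)} {x : K} :
    (Sum.inl x : GlueSpace K Kn L k0) ∉ fiberOpen n k l U := by
  rintro ⟨q, _, h⟩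
  cases h

@[simp] lemma inr_mem_fiberOpen {n : ℕ} {k : K} {l : K →₀ ℝ} {U : Set (Kn n)}
    {q : FiberPt K Kn L k0} :
    (Sum.inr q : GlueSpace K Kn L k0) ∈ fiberOpen n k l U ↔
      ∃ h : q.n = n, q.k = k ∧ q.l = l ∧ (h ▸ q.j) ∈ U := by
  constructor
  · rintro ⟨q', hq', h⟩
    cases h; exact hq'
  · intro h; exact ⟨q, h, rfl⟩

lemma glue_continuous_inl : @Continuous K (GlueSpace K Kn L k0) _ _ Sum.inl := by
  apply continuous_generateFrom_iff.mpr
  rintro S (⟨n, k, l, U, hU, hk0, rfl⟩ | ⟨G, F, C, hG, hFC, rfl⟩)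
  · convert isOpen_empty
    ext x
    simp only [Set.mem_preimage, Set.mem_empty_iff_false, iff_false]
    exact inl_not_mem_fiberOpen (x := x) (U := U) (k := k) (l := l)
  · convert hG
    ext x
    exact inl_mem_baseOpen (x := x) (G := G) (F := F) (C := C)

/-- The embedding of `K` in `K′` as a continuous map. -/
def inlC : C(K, GlueSpace K Kn L k0) := ⟨fun x => Sum.inl x, glue_continuous_inl⟩

end WithTop
end Aux1
section Aux2

variable {K : Type*} {Kn : ℕ → Type*} {L : Set (K →₀ ℝ)} {k0 : ∀ n, Kn n}
variable [TopologicalSpace K] [∀ n, TopologicalSpace (Kn n)]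

lemma glue_continuous_glPt [∀ m, T2Space (Kn m)] (l : K →₀ ℝ) (hl : l ∈ L) (n : ℕ)
    (k : K) (hk : l k ≠ 0) :
    Continuous fun j : Kn n => (glPt (k0 := k0) l hl n k hk j) := by
  apply continuous_generateFrom_iff.mpr
  rintro S (⟨n', k', l', U, hU, hk0, rfl⟩ | ⟨G, F, C, hG, hFC, rfl⟩)
  · by_cases hn : n = n'
    · subst hn
      by_cases hkl : k = k' ∧ l = l'
      · obtain ⟨rfl, rfl⟩ := hkl
        have : (fun j : Kn n => glPt (k0 := k0) l hl n k hk j) ⁻¹' fiberOpen n k l U = U := by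
          ext j
          simp only [Set.mem_preimage]
          constructor
          · intro hj
            by_cases h : j = k0 n
            · rw [glPt_pos h] at hj
              exact absurd hj inl_not_mem_fiberOpen
            · rw [glPt_neg h] at hj
              obtain ⟨hh, -, -, hU'⟩ := inr_mem_fiberOpen.mp hj
              exact hU'
          · intro hj
            have h : j ≠ k0 n := fun h => hk0 (h ▸ hj)
            rw [glPt_neg h]
            exact inr_mem_fiberOpen.mpr ⟨rfl, rfl, rfl, hj⟩
        rw [this]; exact hU
      · have : (fun j : Kn n => glPt (k0 := k0) l hl n k hk j) ⁻¹' fiberOpen n k' l' U = ∅ := by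
          ext j
          simp only [Set.mem_preimage, Set.mem_empty_iff_false, iff_false]
          intro hj
          by_cases h : j = k0 n
          · rw [glPt_pos h] at hj
            exact inl_not_mem_fiberOpen hj
          · rw [glPt_neg h] at hj
            obtain ⟨hh, h1, h2, -⟩ := inr_mem_fiberOpen.mp hj
            exact hkl ⟨h1, h2⟩
        rw [this]; exact isOpen_empty
    · have : (fun j : Kn n => glPt (k0 := k0) l hl n k hk j) ⁻¹' fiberOpen n' k' l' U = ∅ := by
        ext j
        simp only [Set.mem_preimage, Set.mem_empty_iff_false, iff_false]
        intro hj
        by_cases h : j = k0 n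
        · rw [glPt_pos h] at hj
          exact inl_not_mem_fiberOpen hj
        · rw [glPt_neg h] at hj
          obtain ⟨hh, -⟩ := inr_mem_fiberOpen.mp hj
          exact hn hh
      rw [this]; exact isOpen_empty
  · by_cases hkG : k ∈ G
    · by_cases hF : ((k, l, n) : K × (K →₀ ℝ) × ℕ) ∈ F
      · have : (fun j : Kn n => glPt (k0 := k0) l hl n k hk j) ⁻¹' baseOpen G F C
            = (C (k, l, n))ᶜ := by
          ext j
          simp only [Set.mem_preimage, Set.mem_compl_iff]
          by_cases h : j = k0 n
          · rw [glPt_pos h]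
            refine inl_mem_baseOpen.trans ?_
            subst h
            exact iff_of_true hkG (hFC _ hF).2
          · rw [glPt_neg h]
            refine inr_mem_baseOpen.trans ?_
            simp [hkG, hF]
        rw [this]
        exact ((hFC _ hF).1.isClosed).isOpen_compl
      · have : (fun j : Kn n => glPt (k0 := k0) l hl n k hk j) ⁻¹' baseOpen G F C
            = Set.univ := by
          ext j
          simp only [Set.mem_preimage, Set.mem_univ, iff_true]
          by_cases h : j = k0 n
          · rw [glPt_pos h]
            exact inl_mem_baseOpen.mpr hkG
          · rw [glPt_neg h]
            exact inr_mem_baseOpen.mpr ⟨hkG, fun hc => hF hc.1⟩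
        rw [this]; exact isOpen_univ
    · have : (fun j : Kn n => glPt (k0 := k0) l hl n k hk j) ⁻¹' baseOpen G F C = ∅ := by
        ext j
        simp only [Set.mem_preimage, Set.mem_empty_iff_false, iff_false]
        intro hj
        by_cases h : j = k0 n
        · rw [glPt_pos h] at hj
          exact hkG (inl_mem_baseOpen.mp hj)
        · rw [glPt_neg h] at hj
          exact hkG (inr_mem_baseOpen.mp hj).1
      rw [this]; exact isOpen_empty

lemma exists_baseOpen_subset {U : Set (GlueSpace K Kn L k0)} (hU : IsOpen U) {k : K}
    (hk : Sum.inl k ∈ U) :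
    ∃ (G : Set K) (F : Finset (K × (K →₀ ℝ) × ℕ))
      (C : (t : K × (K →₀ ℝ) × ℕ) → Set (Kn t.2.2)),
      IsOpen G ∧ k ∈ G ∧ (∀ t ∈ F, IsCompact (C t) ∧ k0 t.2.2 ∉ C t) ∧
        baseOpen G F C ⊆ U := by
  have hU' : TopologicalSpace.GenerateOpen (glueGen (L := L) (k0 := k0)) U := hU
  clear hU
  induction hU' with
  | basic S hS =>
    rcases hS with ⟨n, k', l, Uo, hUo, hk0, rfl⟩ | ⟨G, F, C, hG, hFC, rfl⟩
    · exact absurd hk inl_not_mem_fiberOpen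
    · exact ⟨G, F, C, hG, inl_mem_baseOpen.mp hk, hFC, subset_rfl⟩
  | univ =>
    exact ⟨Set.univ, ∅, fun _ => ∅, isOpen_univ, trivial, by simp, Set.subset_univ _⟩
  | inter U V hUo hVo ihU ihV =>
    obtain ⟨G, F, C, hGo, hkG, hFC, hsub⟩ := ihU hk.1
    obtain ⟨G', F', C', hG'o, hkG', hFC', hsub'⟩ := ihV hk.2
    refine ⟨G ∩ G', F ∪ F',
      fun t => (if t ∈ F then C t else ∅) ∪ (if t ∈ F' then C' t else ∅),
      hGo.inter hG'o, ⟨hkG, hkG'⟩, ?_, ?_⟩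
    · intro t _
      constructor
      · apply IsCompact.union <;> (split_ifs with h) 
        · exact (hFC t h).1
        · exact isCompact_empty
        · exact (hFC' t h).1
        · exact isCompact_empty
      · rintro (h | h) <;> revert h <;> split_ifs with hh
        · exact (hFC t hh).2
        · simp
        · exact (hFC' t hh).2
        · simp
    · intro x hx
      constructor
      · apply hsub
        rcases hx with ⟨g, hg, rfl⟩ | ⟨q, ⟨hqk, hqn⟩, rfl⟩
        · exact Or.inl ⟨g, hg.1, rfl⟩
        · refine Or.inr ⟨q, ⟨hqk.1, fun hc => hqn ⟨Finset.mem_union_left _ hc.1, ?_⟩⟩, rfl⟩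
          exact Or.inl (by rw [if_pos hc.1]; exact hc.2)
      · apply hsub'
        rcases hx with ⟨g, hg, rfl⟩ | ⟨q, ⟨hqk, hqn⟩, rfl⟩
        · exact Or.inl ⟨g, hg.2, rfl⟩
        · refine Or.inr ⟨q, ⟨hqk.2, fun hc => hqn ⟨Finset.mem_union_right _ hc.1, ?_⟩⟩, rfl⟩
          exact Or.inr (by rw [if_pos hc.1]; exact hc.2)
  | sUnion S hS ih =>
    obtain ⟨s, hsS, hks⟩ := hk
    obtain ⟨G, F, C, h1, h2, h3, h4⟩ := ih s hsS hks
    exact ⟨G, F, C, h1, h2, h3, h4.trans (Set.subset_sUnion_of_mem hsS)⟩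

end Aux2
section Aux3

/-- The pairing of a finitely supported measure with a continuous function. -/
noncomputable def pairF {X : Type*} [TopologicalSpace X] (μ : X →₀ ℝ) (f : C(X, ℝ)) : ℝ :=
  μ.sum fun x c => c * f x

lemma continuous_pairF {X : Type*} [TopologicalSpace X] (g : C(X, ℝ)) :
    Continuous fun μ : X →₀ ℝ => pairF μ g := by
  have h : Continuous fun μ : X →₀ ℝ => (fun f : C(X, ℝ) => μ.sum fun x c => c * f x) :=
    continuous_induced_dom
  exact (continuous_apply g).comp h

lemma tendsto_nhds_of_pairF {X : Type*} [TopologicalSpace X] {α : Type*} {F : Filter α}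
    {m : α → X →₀ ℝ} {μlim : X →₀ ℝ}
    (h : ∀ g : C(X, ℝ), Filter.Tendsto (fun x => pairF (m x) g) F (𝓝 (pairF μlim g))) :
    Filter.Tendsto m F (𝓝 μlim) := by
  have hn : (𝓝 μlim : Filter (X →₀ ℝ))
      = Filter.comap (fun μ (f : C(X, ℝ)) => μ.sum fun x c => c * f x)
          (𝓝 (fun f : C(X, ℝ) => μlim.sum fun x c => c * f x)) := nhds_induced _ μlim
  rw [hn, Filter.tendsto_comap_iff]
  exact tendsto_pi_nhds.mpr h

variable {K : Type*} {Kn : ℕ → Type*} {L : Set (K →₀ ℝ)} {k0 : ∀ n, Kn n}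
variable [TopologicalSpace K] [∀ n, TopologicalSpace (Kn n)]

lemma pairF_extendM (l : K →₀ ℝ) (hl : l ∈ L) (n : ℕ) (ln : Kn n →₀ ℝ)
    (f : C(GlueSpace K Kn L k0, ℝ)) :
    pairF (extendM L k0 l hl n ln) f =
      ∑ k ∈ l.support.attach, ∑ j ∈ ln.support,
        l k.1 * ln j * f (glPt (k0 := k0) l hl n k.1 (Finsupp.mem_support_iff.mp k.2) j) := by
  rw [extendM_eq]
  unfold pairF
  rw [← Finsupp.sum_finset_sum_index (h := fun x c => c * f x) (fun a => zero_mul _) (fun a b₁ b₂ => add_mul _ _ _)]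
  refine Finset.sum_congr rfl fun k _ => ?_
  rw [← Finsupp.sum_finset_sum_index (h := fun x c => c * f x) (fun a => zero_mul _) (fun a b₁ b₂ => add_mul _ _ _)]
  refine Finset.sum_congr rfl fun j _ => ?_
  rw [Finsupp.sum_single_index (h := fun x c => c * f x) (zero_mul _)]

/-- The function on the fiber `Kn n` obtained by integrating `f` against `l` along
the fibers over the support of `l`. -/
noncomputable def glG [∀ m, T2Space (Kn m)] (l : K →₀ ℝ) (hl : l ∈ L) (n : ℕ)
    (f : C(GlueSpace K Kn L k0, ℝ)) : C(Kn n, ℝ) :=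
  ⟨fun j => ∑ k ∈ l.support.attach,
      l k.1 * f (glPt (k0 := k0) l hl n k.1 (Finsupp.mem_support_iff.mp k.2) j),
   continuous_finset_sum _ fun k _ =>
     continuous_const.mul (f.continuous.comp (glue_continuous_glPt l hl n k.1 _))⟩

lemma pairF_extendM_eq_glG [∀ m, T2Space (Kn m)] (l : K →₀ ℝ) (hl : l ∈ L) (n : ℕ)
    (ln : Kn n →₀ ℝ) (f : C(GlueSpace K Kn L k0, ℝ)) :
    pairF (extendM L k0 l hl n ln) f = pairF ln (glG (k0 := k0) l hl n f) := by
  rw [pairF_extendM, Finset.sum_comm]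
  unfold pairF
  rw [Finsupp.sum]
  refine Finset.sum_congr rfl fun j _ => ?_
  simp only [glG, ContinuousMap.coe_mk]
  rw [Finset.mul_sum]
  refine Finset.sum_congr rfl fun k _ => by ring

lemma pairF_extendM_delta (l : K →₀ ℝ) (hl : l ∈ L)
    (f : C(GlueSpace K Kn L k0, ℝ)) :
    pairF (extendM L k0 l hl 0 (Finsupp.single (k0 0) 1)) f = pairF l (f.comp inlC) := by
  rw [pairF_extendM]
  unfold pairF
  rw [Finsupp.sum]
  rw [← Finset.sum_attach l.support (fun k => l k * (f.comp inlC) k)]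
  refine Finset.sum_congr rfl fun k _ => ?_
  rw [Finsupp.support_single_ne_zero _ one_ne_zero, Finset.sum_singleton,
    Finsupp.single_eq_same, glPt_pos rfl]
  simp [inlC]
  exact Or.inl rfl

end Aux3
section Aux4

variable {K : Type*} {Kn : ℕ → Type*} {L : Set (K →₀ ℝ)} {k0 : ∀ n, Kn n}
variable [TopologicalSpace K] [∀ n, TopologicalSpace (Kn n)]

lemma glue_badset [CompactSpace K] [∀ m, T2Space (Kn m)]
    (f : C(GlueSpace K Kn L k0, ℝ)) {ε : ℝ} (hε : 0 < ε) :
    ∃ B : Finset (K × (K →₀ ℝ) × ℕ), ∀ q : FiberPt K Kn L k0,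
      (q.k, q.l, q.n) ∉ B → |f (Sum.inr q) - f (Sum.inl q.k)| ≤ ε := by
  have h1 : ∀ k : K, ∃ (G : Set K) (F : Finset (K × (K →₀ ℝ) × ℕ))
      (C : (t : K × (K →₀ ℝ) × ℕ) → Set (Kn t.2.2)),
      IsOpen G ∧ k ∈ G ∧ (∀ t ∈ F, IsCompact (C t) ∧ k0 t.2.2 ∉ C t) ∧
        baseOpen G F C ⊆ f ⁻¹' (Metric.ball (f (Sum.inl k)) (ε / 2)) := fun k =>
    exists_baseOpen_subset (f.continuous.isOpen_preimage _ Metric.isOpen_ball)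
      (Set.mem_preimage.mpr (Metric.mem_ball_self (half_pos hε)))
  choose G F C hGo hkG hFC hsub using h1
  obtain ⟨t, ht⟩ := IsCompact.elim_finite_subcover isCompact_univ G hGo
    (fun k _ => Set.mem_iUnion.mpr ⟨k, hkG k⟩)
  refine ⟨t.biUnion F, fun q hq => ?_⟩
  obtain ⟨i, hit, hqG⟩ : ∃ i ∈ t, q.k ∈ G i := by
    have := ht (Set.mem_univ q.k)
    simpa using this
  have hqin : Sum.inr q ∈ baseOpen (G i) (F i) (C i) :=
    inr_mem_baseOpen.mpr ⟨hqG, fun hc => hq (Finset.mem_biUnion.mpr ⟨i, hit, hc.1⟩)⟩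
  have h2 : dist (f (Sum.inr q)) (f (Sum.inl i)) < ε / 2 := hsub i hqin
  have h3 : dist (f (Sum.inl q.k)) (f (Sum.inl i)) < ε / 2 := hsub i (show (Sum.inl q.k : GlueSpace K Kn L k0) ∈ baseOpen (G i) (F i) (C i)
    from inl_mem_baseOpen.mpr hqG)
  rw [dist_comm] at h3
  have h4 := dist_triangle (f (Sum.inr q)) (f (Sum.inl i)) (f (Sum.inl q.k))
  rw [← Real.dist_eq]
  linarith

lemma glue_est [CompactSpace K] [∀ m, T2Space (Kn m)]
    (Ln : ∀ n, Set (Kn n →₀ ℝ))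
    (hLprob : ∀ l ∈ L, (∀ x, 0 ≤ l x) ∧ (l.sum fun _ c => c) = 1)
    (hLnprob : ∀ n, ∀ ln ∈ Ln n, (∀ x, 0 ≤ ln x) ∧ (ln.sum fun _ c => c) = 1)
    (f : C(GlueSpace K Kn L k0, ℝ)) {ε : ℝ} (hε : 0 < ε) :
    ∃ B : Finset (K × (K →₀ ℝ) × ℕ), ∀ l (hl : l ∈ L) n ln, ln ∈ Ln n →
      (∀ k : K, ((k, l, n) : K × (K →₀ ℝ) × ℕ) ∉ B) →
      |pairF (extendM L k0 l hl n ln) f - pairF l (f.comp inlC)| ≤ ε := by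
  obtain ⟨B, hB⟩ := glue_badset (k0 := k0) (L := L) f hε
  refine ⟨B, fun l hl n ln hln hB' => ?_⟩
  have hl0 : ∀ x, 0 ≤ l x := (hLprob l hl).1
  have hln0 : ∀ x, 0 ≤ ln x := (hLnprob n ln hln).1
  have hl1 : ∑ k ∈ l.support, l k = 1 := (hLprob l hl).2
  have hln1 : ∑ j ∈ ln.support, ln j = 1 := (hLnprob n ln hln).2
  have hbase : pairF l (f.comp inlC) = ∑ k ∈ l.support.attach, ∑ j ∈ ln.support,
      l k.1 * ln j * f (Sum.inl k.1) := by
    unfold pairF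
    rw [Finsupp.sum]
    rw [← Finset.sum_attach l.support (fun k => l k * (f.comp inlC) k)]
    refine Finset.sum_congr rfl fun k _ => ?_
    have : ∑ j ∈ ln.support, l k.1 * ln j * f (Sum.inl k.1)
        = (l k.1 * f (Sum.inl k.1)) * ∑ j ∈ ln.support, ln j := by
      rw [Finset.mul_sum]
      exact Finset.sum_congr rfl fun j _ => by ring
    rw [this, hln1, mul_one]
    rfl
  rw [pairF_extendM, hbase, ← Finset.sum_sub_distrib]
  have hterm : ∀ k ∈ l.support.attach, |∑ j ∈ ln.support,
        l k.1 * ln j * f (glPt (k0 := k0) l hl n k.1 (Finsupp.mem_support_iff.mp k.2) j)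
      - ∑ j ∈ ln.support, l k.1 * ln j * f (Sum.inl k.1)| ≤ l k.1 * ε := by
    intro k _
    rw [← Finset.sum_sub_distrib]
    refine le_trans (Finset.abs_sum_le_sum_abs _ _) ?_
    have hjb : ∀ j ∈ ln.support,
        |l k.1 * ln j * f (glPt (k0 := k0) l hl n k.1 (Finsupp.mem_support_iff.mp k.2) j)
          - l k.1 * ln j * f (Sum.inl k.1)| ≤ l k.1 * ln j * ε := by
      intro j _
      rw [← mul_sub, abs_mul, abs_of_nonneg (mul_nonneg (hl0 _) (hln0 _))]
      refine mul_le_mul_of_nonneg_left ?_ (mul_nonneg (hl0 _) (hln0 _))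
      by_cases hj : j = k0 n
      · rw [glPt_pos hj, sub_self, abs_zero]
        exact hε.le
      · rw [glPt_neg hj]
        exact hB _ (hB' k.1)
    refine le_trans (Finset.sum_le_sum hjb) ?_
    have : ∑ j ∈ ln.support, l k.1 * ln j * ε = (l k.1 * ε) * ∑ j ∈ ln.support, ln j := by
      rw [Finset.mul_sum]
      exact Finset.sum_congr rfl fun j _ => by ring
    rw [this, hln1, mul_one]
  refine le_trans (Finset.abs_sum_le_sum_abs _ _) ?_
  refine le_trans (Finset.sum_le_sum hterm) ?_
  rw [← Finset.sum_mul, Finset.sum_attach l.support (fun k => l k), hl1, one_mul]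

end Aux4
/-- Lemma 1(6) of the paper: if `L` and all `Ln n` are weak*-compact sets of purely atomic
finitely supported probability measures with `δ_{k_{n,0}} ∈ Ln n`, then the extended set
`L′` is weak*-compact. -/
theorem stmt15 {K : Type*} [TopologicalSpace K] [CompactSpace K] [T2Space K]
    {Kn : ℕ → Type*} [∀ n, TopologicalSpace (Kn n)] [∀ n, CompactSpace (Kn n)]
    [∀ n, T2Space (Kn n)]
    (L : Set (K →₀ ℝ)) (k0 : ∀ n, Kn n) (Ln : ∀ n, Set (Kn n →₀ ℝ))
    (hLprob : ∀ l ∈ L, (∀ x, 0 ≤ l x) ∧ (l.sum fun _ c => c) = 1)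
    (hLnprob : ∀ n, ∀ ln ∈ Ln n, (∀ x, 0 ≤ ln x) ∧ (ln.sum fun _ c => c) = 1)
    (hδ : ∀ n, Finsupp.single (k0 n) (1 : ℝ) ∈ Ln n)
    (hLcpt : IsCompact L) (hLncpt : ∀ n, IsCompact (Ln n)) :
    IsCompact (glueL' L k0 Ln) := by
  classical
  rcases Set.eq_empty_or_nonempty (glueL' L k0 Ln) with hE | ⟨μ₀, hμ₀⟩
  · rw [hE]; exact isCompact_empty
  obtain ⟨l₀, hl₀, -, -, -, -⟩ := hμ₀
  haveI hne1 : Nonempty {l // l ∈ L} := ⟨⟨l₀, hl₀⟩⟩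
  haveI hne2 : Nonempty (Σ n, Kn n →₀ ℝ) := ⟨⟨0, 0⟩⟩
  have hsel : ∀ μ ∈ glueL' L k0 Ln, ∃ (x : {l // l ∈ L}) (s : Σ n, Kn n →₀ ℝ),
      s.2 ∈ Ln s.1 ∧ μ = extendM L k0 x.1 x.2 s.1 s.2 := by
    rintro μ ⟨l, hl, n, ln, h1, h2⟩
    exact ⟨⟨l, hl⟩, ⟨n, ln⟩, h1, h2⟩
  choose! a d hd hrep using hsel
  rw [isCompact_iff_ultrafilter_le_nhds]
  intro 𝒰 h𝒰
  have hLmem : ∀ᶠ μ in (𝒰 : Filter _), μ ∈ glueL' L k0 Ln := le_principal_iff.mp h𝒰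
  by_cases hC : ∃ (l' : K →₀ ℝ) (n' : ℕ),
      {μ : GlueSpace K Kn L k0 →₀ ℝ | (a μ).1 = l' ∧ (d μ).1 = n'} ∈ 𝒰
  · obtain ⟨l', n', hset⟩ := hC
    have hsetEv : ∀ᶠ μ in (𝒰 : Filter _), (a μ).1 = l' ∧ (d μ).1 = n' := hset
    have hl' : l' ∈ L := by
      obtain ⟨μ, hμ⟩ := (hsetEv.and hLmem).exists
      exact hμ.1.1 ▸ (a μ).2
    set e : (GlueSpace K Kn L k0 →₀ ℝ) → (Kn n' →₀ ℝ) :=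
      fun μ => if h : (d μ).1 = n' then h ▸ (d μ).2 else Finsupp.single (k0 n') 1 with he
    have hkey : ∀ μ, μ ∈ glueL' L k0 Ln → (a μ).1 = l' → (d μ).1 = n' →
        μ = extendM L k0 l' hl' n' (e μ) ∧ e μ ∈ Ln n' := by
      intro μ hμ hA hn
      have hcast : (⟨n', e μ⟩ : Σ n, Kn n →₀ ℝ) = d μ := by
        rw [he]
        simp only [dif_pos hn]
        exact sigma_eta (d μ) hn
      have h2 := hd μ hμ
      constructor
      · exact (hrep μ hμ).trans (extendM_congr (y := ⟨l', hl'⟩) (t := ⟨n', e μ⟩) (Subtype.ext hA) hcast.symm)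
      · rw [← hcast] at h2
        exact h2
    have hWle : ↑(𝒰.map e) ≤ Filter.principal (Ln n') := by
      rw [Ultrafilter.coe_map, Filter.le_principal_iff, Filter.mem_map]
      exact (hLmem.and hsetEv).mono fun μ h => (hkey μ h.1 h.2.1 h.2.2).2
    obtain ⟨lnlim, hlnlim, hW⟩ := (hLncpt n').ultrafilter_le_nhds (𝒰.map e) hWle
    rw [Ultrafilter.coe_map] at hW
    refine ⟨extendM L k0 l' hl' n' lnlim, ⟨l', hl', n', lnlim, hlnlim, rfl⟩, ?_⟩
    rw [← Filter.tendsto_id']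
    apply tendsto_nhds_of_pairF
    intro g
    rw [pairF_extendM_eq_glG]
    have h1 : Filter.Tendsto (fun μ => pairF (e μ) (glG (k0 := k0) l' hl' n' g)) 𝒰
        (𝓝 (pairF lnlim (glG (k0 := k0) l' hl' n' g))) :=
      ((continuous_pairF _).tendsto lnlim).comp hW
    refine h1.congr' ?_
    filter_upwards [hLmem, hsetEv] with μ hμ hs
    have := (hkey μ hμ hs.1 hs.2).1
    conv_rhs => rw [show pairF (id μ) g = pairF μ g from rfl, this]
    rw [pairF_extendM_eq_glG]
  · push_neg at hC
    have hNo : ∀ (l' : K →₀ ℝ) (n' : ℕ),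
        {μ : GlueSpace K Kn L k0 →₀ ℝ | (a μ).1 = l' ∧ (d μ).1 = n'} ∉ 𝒰 := hC
    have hAL : ↑(𝒰.map fun μ => ((a μ).1 : K →₀ ℝ)) ≤ Filter.principal L := by
      rw [Ultrafilter.coe_map, Filter.le_principal_iff, Filter.mem_map]
      exact hLmem.mono fun μ _ => (a μ).2
    obtain ⟨llim, hllim, hAten⟩ := hLcpt.ultrafilter_le_nhds _ hAL
    rw [Ultrafilter.coe_map] at hAten
    refine ⟨extendM L k0 llim hllim 0 (Finsupp.single (k0 0) 1),
      ⟨llim, hllim, 0, _, hδ 0, rfl⟩, ?_⟩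
    rw [← Filter.tendsto_id']
    apply tendsto_nhds_of_pairF
    intro g
    rw [pairF_extendM_delta]
    have h1 : Filter.Tendsto (fun μ => pairF ((a μ).1) (g.comp inlC)) 𝒰
        (𝓝 (pairF llim (g.comp inlC))) :=
      ((continuous_pairF _).tendsto llim).comp hAten
    have h2 : Filter.Tendsto
        (fun μ => pairF (id μ) g - pairF ((a μ).1) (g.comp inlC)) 𝒰 (𝓝 0) := by
      rw [Metric.tendsto_nhds]
      intro ε hε
      obtain ⟨B, hB⟩ := glue_est (k0 := k0) Ln hLprob hLnprob g (half_pos hε)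
      have hEvB : ∀ᶠ μ in (𝒰 : Filter _), ∀ t ∈ B,
          ¬((a μ).1 = t.2.1 ∧ (d μ).1 = t.2.2) := by
        rw [Filter.eventually_all_finset]
        intro t ht
        have := (Ultrafilter.compl_mem_iff_notMem (f := 𝒰)).mpr (hNo t.2.1 t.2.2)
        exact this
      filter_upwards [hLmem, hEvB] with μ hμ hBμ
      have hrepμ := hrep μ hμ
      have hest : |pairF μ g - pairF ((a μ).1) (g.comp inlC)| ≤ ε / 2 := by
        have h3 := hB (a μ).1 (a μ).2 (d μ).1 (d μ).2 (hd μ hμ)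
          (fun k hk => hBμ _ hk ⟨rfl, rfl⟩)
        rw [← hrepμ] at h3
        exact h3
      rw [Real.dist_eq, sub_zero]
      exact lt_of_le_of_lt hest (half_lt_self hε)
    have h3 := h2.add h1
    rw [zero_add] at h3
    refine h3.congr fun μ => ?_
    simp
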